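/- Assume 2 is a unit of S. Then Jac(R)² ⊆ Jac(S)·R, where Jac denotes the Jacobson radical. (Proof: for x ∈ Jac(R), both x + λ(x) and λ(x)·x lie in Jac(R) ∩ S ⊆ Jac(S), so x² ∈ Jac(S)·R; then use xy = ((x+y)² - x² - y²)/2.) -/

import Mathlib

/-- If the fixed subring `S` of `λ` is local and `2 ∈ S^×`, then
`Jac(R)² ⊆ Jac(S)·R`. -/
theorem stmt14 {R : Type*} [CommRing R] (l : R →+* R) (hl : ∀ x, l (l x) = x)
    (S : Subring R) (hS : ∀ x, x ∈ S ↔ l x = x) [IsLocalRing S]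
    (h2 : IsUnit (2 : S)) :
    Ideal.jacobson (⊥ : Ideal R) ^ 2 ≤ Ideal.map S.subtype (IsLocalRing.maximalIdeal S) := by
  set J := Ideal.jacobson (⊥ : Ideal R) with hJ
  set K := Ideal.map S.subtype (IsLocalRing.maximalIdeal S) with hK
  -- elements of S that lie in J lie in K
  have hSJ : ∀ s : S, (s : R) ∈ J → (s : R) ∈ K := by
    intro s hs
    have hsmem : s ∈ IsLocalRing.maximalIdeal S := by
      rw [← IsLocalRing.jacobson_eq_maximalIdeal (⊥ : Ideal S) bot_ne_top,
        Ideal.mem_jacobson_bot]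
      intro y
      have hu : IsUnit ((s : R) * (y : R) + 1) :=
        Ideal.mem_jacobson_bot.mp hs (y : R)
      obtain ⟨u, hu⟩ := hu
      have hmem : ((u : R)) ∈ S := by
        rw [hu]; exact S.add_mem (S.mul_mem s.2 y.2) S.one_mem
      have h2u : l (u : R) = u := (hS _).mp hmem
      have hinv : ((u⁻¹ : Rˣ) : R) ∈ S := by
        rw [hS]
        have hmul : l ((u⁻¹ : Rˣ) : R) * (u : R) = 1 := by
          rw [← h2u, ← map_mul, Units.inv_mul, map_one]
        calc l ((u⁻¹ : Rˣ) : R) = l ((u⁻¹ : Rˣ) : R) * ((u : R) * ((u⁻¹ : Rˣ) : R)) := by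
              rw [Units.mul_inv, mul_one]
          _ = (l ((u⁻¹ : Rˣ) : R) * (u : R)) * ((u⁻¹ : Rˣ) : R) := by ring
          _ = ((u⁻¹ : Rˣ) : R) := by rw [hmul, one_mul]
      refine ⟨⟨⟨(u : R), hmem⟩, ⟨((u⁻¹ : Rˣ) : R), hinv⟩, ?_, ?_⟩, ?_⟩
      · exact Subtype.ext (by simpa using u.mul_inv)
      · exact Subtype.ext (by simpa using u.inv_mul)
      · exact Subtype.ext (by simpa using hu)
    exact Ideal.mem_map_of_mem S.subtype hsmem
  -- J is stable under l
  have hlJ : ∀ x ∈ J, l x ∈ J := by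
    intro x hx
    rw [hJ, Ideal.mem_jacobson_bot] at hx ⊢
    intro y
    simpa [map_add, map_mul, map_one, hl] using ((hx (l y)).map l)
  -- squares of elements of J lie in K
  have hsq : ∀ x ∈ J, x * x ∈ K := by
    intro x hx
    have h1 : x + l x ∈ J := J.add_mem hx (hlJ x hx)
    have h2' : l x * x ∈ J := J.mul_mem_right x (hlJ x hx)
    have hs1 : (x + l x) ∈ S := by rw [hS]; rw [map_add, hl]; ring
    have hs2 : l x * x ∈ S := by rw [hS]; rw [map_mul, hl]; ring
    have k1 := hSJ ⟨_, hs1⟩ h1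
    have k2 := hSJ ⟨_, hs2⟩ h2'
    have hx2 : x * x = x * (x + l x) - l x * x := by ring
    rw [hx2]
    exact K.sub_mem (K.mul_mem_left x k1) k2
  rw [pow_two, Ideal.mul_le]
  intro x hx y hy
  have hxy2 : (2 : R) * (x * y) ∈ K := by
    have hxy : (2 : R) * (x * y) = (x + y) * (x + y) - x * x - y * y := by ring
    rw [hxy]
    exact K.sub_mem (K.sub_mem (hsq (x + y) (J.add_mem hx hy)) (hsq x hx)) (hsq y hy)
  obtain ⟨c, hc⟩ := h2.exists_left_inv
  have hc' : (c : R) * 2 = 1 := by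
    have := congrArg (Subtype.val) hc
    push_cast at this
    have h22 : ((2 : S) : R) = 2 := map_ofNat S.subtype 2
    simpa [h22] using this
  have hfin : x * y = (c : R) * ((2 : R) * (x * y)) := by
    rw [← mul_assoc, hc', one_mul]
  rw [hfin]
  exact K.mul_mem_left _ hxy2
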